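/- Let 5/6 < θ < 1 and set φ₂(t) = (5/(6θ))·(1 + √((6θ−5)/3)·(2(t−1/2))^{1/3}) and φ₃(t) = (5/(6θ))·(1 − √((6θ−5)/3)·(2(t−1/2))^{1/3}) for t ∈ [0,1]. Then φ₂ and φ₃ are strictly positive on [0,1] and satisfy ∫₀¹ (1 + θ(4(t−1/2)(u−1/2))^{1/3}) φᵢ(u)² du = φᵢ(t) for all t ∈ [0,1], i = 2,3. -/

import Mathlib

open MeasureTheory Set

noncomputable def cbrt (x : ℝ) : ℝ := Real.sign x * |x| ^ ((1:ℝ)/3)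

lemma abs_sign_le (x : ℝ) : |Real.sign x| ≤ 1 := by
  rcases lt_trichotomy x 0 with h|h|h <;>
    simp [Real.sign_of_neg, Real.sign_of_pos, Real.sign_zero, h]

lemma abs_cbrt_le (x : ℝ) : |cbrt x| ≤ |x| ^ ((1:ℝ)/3) := by
  rw [cbrt, abs_mul, abs_of_nonneg (Real.rpow_nonneg (abs_nonneg x) _)]
  exact mul_le_of_le_one_left (Real.rpow_nonneg (abs_nonneg x) _) (abs_sign_le x)

lemma real_sign_mul (x y : ℝ) : Real.sign (x * y) = Real.sign x * Real.sign y := by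
  rcases lt_trichotomy x 0 with hx|hx|hx <;> rcases lt_trichotomy y 0 with hy|hy|hy
  · rw [Real.sign_of_pos (mul_pos_of_neg_of_neg hx hy), Real.sign_of_neg hx,
      Real.sign_of_neg hy]; ring
  · simp [hy, Real.sign_zero]
  · rw [Real.sign_of_neg (mul_neg_of_neg_of_pos hx hy), Real.sign_of_neg hx,
      Real.sign_of_pos hy]; ring
  · simp [hx, Real.sign_zero]
  · simp [hx, Real.sign_zero]
  · simp [hx, Real.sign_zero]
  · rw [Real.sign_of_neg (mul_neg_of_pos_of_neg hx hy), Real.sign_of_pos hx,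
      Real.sign_of_neg hy]; ring
  · simp [hy, Real.sign_zero]
  · rw [Real.sign_of_pos (mul_pos hx hy), Real.sign_of_pos hx, Real.sign_of_pos hy]; ring

lemma cbrt_mul (x y : ℝ) : cbrt (x * y) = cbrt x * cbrt y := by
  have habs : |x * y| ^ ((1:ℝ)/3) = |x| ^ ((1:ℝ)/3) * |y| ^ ((1:ℝ)/3) := by
    rw [abs_mul, Real.mul_rpow (abs_nonneg x) (abs_nonneg y)]
  rw [cbrt, cbrt, cbrt, habs, real_sign_mul]; ring

lemma cbrt_neg (x : ℝ) : cbrt (-x) = - cbrt x := by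
  rw [cbrt, cbrt, Real.sign_neg, abs_neg]; ring

lemma cbrt_cube (x : ℝ) : cbrt x ^ 3 = x := by
  rcases lt_trichotomy x 0 with hx|hx|hx
  · rw [cbrt, Real.sign_of_neg hx, mul_pow, ← Real.rpow_natCast (|x| ^ ((1:ℝ)/3)) 3,
      ← Real.rpow_mul (abs_nonneg x)]
    norm_num
    simp [abs_of_neg hx]
  · simp [hx, cbrt, Real.sign_zero]
  · rw [cbrt, Real.sign_of_pos hx, mul_pow, ← Real.rpow_natCast (|x| ^ ((1:ℝ)/3)) 3,
      ← Real.rpow_mul (abs_nonneg x)]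
    norm_num
    exact hx.le

lemma cbrt_sq (x : ℝ) : cbrt x ^ 2 = |x| ^ ((2:ℝ)/3) := by
  rcases eq_or_ne x 0 with hx|hx
  · simp [hx, cbrt, Real.sign_zero, Real.zero_rpow]
  · have hs : Real.sign x ^ 2 = 1 := by
      rcases lt_or_gt_of_ne hx with h|h
      · rw [Real.sign_of_neg h]; ring
      · rw [Real.sign_of_pos h]; ring
    rw [cbrt, mul_pow, hs, one_mul, ← Real.rpow_natCast (|x| ^ ((1:ℝ)/3)) 2,
      ← Real.rpow_mul (abs_nonneg x)]
    norm_num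

lemma continuous_cbrt : Continuous cbrt := by
  have habs : Continuous fun y : ℝ => |y| ^ ((1:ℝ)/3) :=
    continuous_abs.rpow_const (fun x => Or.inr (by norm_num))
  rw [continuous_iff_continuousAt]
  intro x
  rcases lt_trichotomy x 0 with hx|hx|hx
  · refine (habs.continuousAt.neg).congr ?_
    filter_upwards [isOpen_Iio.eventually_mem (show x ∈ Iio (0:ℝ) from hx)] with y hy
    rw [cbrt, Real.sign_of_neg hy, Pi.neg_apply]; ring
  · subst hx
    rw [ContinuousAt]
    have h0 : cbrt 0 = 0 := by simp [cbrt, Real.sign_zero]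
    rw [h0]
    apply squeeze_zero_norm (fun y => abs_cbrt_le y)
    have := habs.tendsto 0
    simpa [Real.zero_rpow (by norm_num : (1:ℝ)/3 ≠ 0)] using this
  · refine habs.continuousAt.congr ?_
    filter_upwards [isOpen_Ioi.eventually_mem (show x ∈ Ioi (0:ℝ) from hx)] with y hy
    rw [cbrt, Real.sign_of_pos hy]; ring

lemma comp_helper (f : ℝ → ℝ) :
    ∫ u in (0:ℝ)..1, f (2*(u - 1/2)) = (1/2) * ∫ v in (-1:ℝ)..1, f v := by
  have h : ∀ u : ℝ, 2*(u - 1/2) = 2*u + (-1) := fun u => by ring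
  simp_rw [h]
  rw [intervalIntegral.integral_comp_mul_add f (by norm_num : (2:ℝ) ≠ 0) (-1)]
  norm_num

lemma split_helper (f : ℝ → ℝ) (hf : Continuous f) :
    ∫ v in (-1:ℝ)..1, f v = (∫ x in (0:ℝ)..1, f (-x)) + ∫ x in (0:ℝ)..1, f x := by
  have h : (∫ x in (0:ℝ)..1, f (-x)) = ∫ x in (-1:ℝ)..0, f x := by
    rw [intervalIntegral.integral_comp_neg]; norm_num
  rw [h, intervalIntegral.integral_add_adjacent_intervals
    (hf.intervalIntegrable _ _) (hf.intervalIntegrable _ _)]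

lemma I1 : ∫ u in (0:ℝ)..1, cbrt (2*(u - 1/2)) = 0 := by
  rw [comp_helper cbrt, split_helper cbrt continuous_cbrt]
  simp [cbrt_neg]

lemma I2 : ∫ u in (0:ℝ)..1, cbrt (2*(u - 1/2)) ^ 2 = 3/5 := by
  have hc : Continuous fun v : ℝ => cbrt v ^ 2 := continuous_cbrt.pow 2
  rw [comp_helper (fun v => cbrt v ^ 2), split_helper _ hc]
  have h1 : (∫ x in (0:ℝ)..1, cbrt (-x) ^ 2) = ∫ x in (0:ℝ)..1, cbrt x ^ 2 := by
    simp [cbrt_neg]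
  have h2 : (∫ x in (0:ℝ)..1, cbrt x ^ 2) = 3/5 := by
    have : (∫ x in (0:ℝ)..1, cbrt x ^ 2) = ∫ x in (0:ℝ)..1, x ^ ((2:ℝ)/3) := by
      apply intervalIntegral.integral_congr
      intro x hx
      rw [uIcc_of_le (by norm_num : (0:ℝ) ≤ 1)] at hx
      show cbrt x ^ 2 = x ^ ((2:ℝ)/3)
      rw [cbrt_sq, abs_of_nonneg hx.1]
    rw [this, integral_rpow (Or.inl (by norm_num))]
    norm_num
  rw [h1, h2]; norm_num

lemma I3 : ∫ u in (0:ℝ)..1, cbrt (2*(u - 1/2)) ^ 3 = 0 := by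
  simp_rw [cbrt_cube]
  rw [comp_helper (fun v => v), integral_id]
  norm_num

lemma key (c a s A : ℝ) :
    ∫ u in (0:ℝ)..1, (1 + c * (a * cbrt (2*(u - 1/2)))) * (A * (1 + s * cbrt (2*(u - 1/2))))^2
      = A^2 * (1 + 3/5*s^2 + 6/5*c*a*s) := by
  have hb : Continuous fun u : ℝ => cbrt (2*(u - 1/2)) :=
    continuous_cbrt.comp (by continuity)
  have heq : ∀ u : ℝ,
      (1 + c * (a * cbrt (2*(u - 1/2)))) * (A * (1 + s * cbrt (2*(u - 1/2))))^2
      = A^2 + (2*A^2*s + c*a*A^2) * cbrt (2*(u - 1/2))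
        + (A^2*s^2 + 2*c*a*A^2*s) * cbrt (2*(u - 1/2))^2
        + (c*a*A^2*s^2) * cbrt (2*(u - 1/2))^3 := fun u => by ring
  simp_rw [heq]
  have hc : IntervalIntegrable (fun _ : ℝ => A^2) volume 0 1 := intervalIntegrable_const
  have hb1 : IntervalIntegrable
      (fun u : ℝ => (2*A^2*s + c*a*A^2) * cbrt (2*(u - 1/2))) volume 0 1 :=
    (continuous_const.mul hb).intervalIntegrable _ _
  have hb2 : IntervalIntegrable
      (fun u : ℝ => (A^2*s^2 + 2*c*a*A^2*s) * cbrt (2*(u - 1/2))^2) volume 0 1 :=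
    (continuous_const.mul (hb.pow 2)).intervalIntegrable _ _
  have hb3 : IntervalIntegrable
      (fun u : ℝ => (c*a*A^2*s^2) * cbrt (2*(u - 1/2))^3) volume 0 1 :=
    (continuous_const.mul (hb.pow 3)).intervalIntegrable _ _
  rw [intervalIntegral.integral_add ((hc.add hb1).add hb2) hb3,
    intervalIntegral.integral_add (hc.add hb1) hb2,
    intervalIntegral.integral_add hc hb1,
    intervalIntegral.integral_const,
    intervalIntegral.integral_const_mul, intervalIntegral.integral_const_mul,
    intervalIntegral.integral_const_mul, I1, I2, I3]
  norm_num
  ring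

theorem stmt7 (θ : ℝ) (hθ0 : 5/6 < θ) (hθ1 : θ < 1) :
    let φ₂ : ℝ → ℝ := fun t => (5/(6*θ)) * (1 + Real.sqrt ((6*θ - 5)/3) * cbrt (2*(t - 1/2)))
    let φ₃ : ℝ → ℝ := fun t => (5/(6*θ)) * (1 - Real.sqrt ((6*θ - 5)/3) * cbrt (2*(t - 1/2)))
    (∀ t ∈ Icc (0:ℝ) 1, 0 < φ₂ t) ∧ (∀ t ∈ Icc (0:ℝ) 1, 0 < φ₃ t) ∧
    (∀ t ∈ Icc (0:ℝ) 1,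
      ∫ u in (0:ℝ)..1, (1 + θ * cbrt (4*(t - 1/2)*(u - 1/2))) * φ₂ u ^ 2 = φ₂ t) ∧
    (∀ t ∈ Icc (0:ℝ) 1,
      ∫ u in (0:ℝ)..1, (1 + θ * cbrt (4*(t - 1/2)*(u - 1/2))) * φ₃ u ^ 2 = φ₃ t) := by
  intro φ₂ φ₃
  set s := Real.sqrt ((6*θ - 5)/3) with hs_def
  set A := 5/(6*θ) with hA_def
  have hθpos : (0:ℝ) < θ := by linarith
  have hApos : 0 < A := by rw [hA_def]; positivity
  have hs0 : 0 ≤ s := Real.sqrt_nonneg _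
  have hs2 : s^2 = (6*θ - 5)/3 := Real.sq_sqrt (by linarith)
  have hs1 : s < 1 := by
    rw [show (1:ℝ) = Real.sqrt 1 by simp [Real.sqrt_one], hs_def]
    exact Real.sqrt_lt_sqrt (by linarith) (by linarith)
  have hcb : ∀ t ∈ Icc (0:ℝ) 1, |cbrt (2*(t - 1/2))| ≤ 1 := by
    intro t ht
    refine (abs_cbrt_le _).trans ?_
    have h1 : |2*(t - 1/2)| ≤ 1 := by
      rw [abs_le]; constructor <;> [linarith [ht.1]; linarith [ht.2]]
    exact Real.rpow_le_one (abs_nonneg _) h1 (by norm_num)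
  have hpos2 : ∀ t ∈ Icc (0:ℝ) 1, 0 < φ₂ t := by
    intro t ht
    have h := abs_le.mp (hcb t ht)
    have : 0 < 1 + s * cbrt (2*(t - 1/2)) := by nlinarith [mul_nonneg hs0 (by linarith [h.1] : (0:ℝ) ≤ cbrt (2*(t - 1/2)) + 1)]
    exact mul_pos hApos this
  have hpos3 : ∀ t ∈ Icc (0:ℝ) 1, 0 < φ₃ t := by
    intro t ht
    have h := abs_le.mp (hcb t ht)
    have : 0 < 1 - s * cbrt (2*(t - 1/2)) := by nlinarith [mul_nonneg hs0 (by linarith [h.2] : (0:ℝ) ≤ 1 - cbrt (2*(t - 1/2)))]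
    exact mul_pos hApos this
  have hrw : ∀ t u : ℝ, cbrt (4*(t - 1/2)*(u - 1/2))
      = cbrt (2*(t - 1/2)) * cbrt (2*(u - 1/2)) := by
    intro t u
    rw [show 4*(t - 1/2)*(u - 1/2) = (2*(t - 1/2))*(2*(u - 1/2)) by ring, cbrt_mul]
  have hfinal : ∀ a s' : ℝ, s'^2 = (6*θ - 5)/3 →
      A^2 * (1 + 3/5*s'^2 + 6/5*θ*a*s') = A * (1 + s' * a) := by
    intro a s' h
    rw [h, hA_def]
    have h6θ : (6:ℝ)*θ ≠ 0 := by positivity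
    field_simp
    ring
  refine ⟨hpos2, hpos3, ?_, ?_⟩
  · intro t ht
    show (∫ u in (0:ℝ)..1, (1 + θ * cbrt (4*(t - 1/2)*(u - 1/2))) *
        (A * (1 + s * cbrt (2*(u - 1/2))))^2) = A * (1 + s * cbrt (2*(t - 1/2)))
    simp_rw [hrw t]
    rw [key θ (cbrt (2*(t - 1/2))) s A]
    exact hfinal _ s hs2
  · intro t ht
    show (∫ u in (0:ℝ)..1, (1 + θ * cbrt (4*(t - 1/2)*(u - 1/2))) *
        (A * (1 - s * cbrt (2*(u - 1/2))))^2) = A * (1 - s * cbrt (2*(t - 1/2)))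
    simp_rw [hrw t, show ∀ b : ℝ, 1 - s * b = 1 + (-s) * b from fun b => by ring]
    rw [key θ (cbrt (2*(t - 1/2))) (-s) A]
    have := hfinal (cbrt (2*(t - 1/2))) (-s) (by rw [neg_pow]; simpa using hs2)
    rw [this]
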